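/- Let G be a simple graph on a vertex type V and let S ⊆ V. Let G[S] denote the induced subgraph of G on S (in Lean: G.induce S). Then the group homomorphism A_{G[S]} → A_G determined by sending the generator corresponding to s ∈ S to s̄ (which is well defined since adjacency in G[S] implies adjacency in G, so relators map to relators) is injective. -/

import Mathlib

/-- The relator set of the right-angled Artin group of a simple graph `G`:
commutators of pairs of adjacent vertices. -/
def raagRels {V : Type*} (G : SimpleGraph V) : Set (FreeGroup V) :=
  {r | ∃ u v : V, G.Adj u v ∧
    r = FreeGroup.of u * FreeGroup.of v * (FreeGroup.of u)⁻¹ * (FreeGroup.of v)⁻¹}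

/-- The right-angled Artin group of a simple graph `G`. -/
abbrev RAAG {V : Type*} (G : SimpleGraph V) : Type _ :=
  PresentedGroup (raagRels G)

/-- The image `v̄` of a vertex (generator) `v` in the right-angled Artin group. -/
def RAAG.gen {V : Type*} (G : SimpleGraph V) (v : V) : RAAG G :=
  PresentedGroup.of (rels := raagRels G) v

theorem stmt_4 {V : Type*} (G : SimpleGraph V) (S : Set V)
    (ψ : RAAG (G.induce S) →* RAAG G)
    (hψ : ∀ s : S, ψ (RAAG.gen (G.induce S) s) = RAAG.gen G (s : V)) :
    Function.Injective ψ := by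
  classical
  -- retraction
  set f : V → RAAG (G.induce S) := fun v =>
    if h : v ∈ S then RAAG.gen (G.induce S) ⟨v, h⟩ else 1 with hf
  have hrel : ∀ r ∈ raagRels G, FreeGroup.lift f r = 1 := by
    rintro r ⟨u, v, huv, rfl⟩
    simp only [map_mul, map_inv, FreeGroup.lift_apply_of, hf]
    by_cases hu : u ∈ S
    · by_cases hv : v ∈ S
      · simp only [dif_pos hu, dif_pos hv]
        have : (FreeGroup.of (⟨u, hu⟩ : S) * FreeGroup.of (⟨v, hv⟩ : S) *
            (FreeGroup.of (⟨u, hu⟩ : S))⁻¹ * (FreeGroup.of (⟨v, hv⟩ : S))⁻¹) ∈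
            raagRels (G.induce S) := ⟨⟨u, hu⟩, ⟨v, hv⟩, huv, rfl⟩
        have h1 := QuotientGroup.eq_one_iff
          (N := Subgroup.normalClosure (raagRels (G.induce S)))
          (FreeGroup.of (⟨u, hu⟩ : S) * FreeGroup.of (⟨v, hv⟩ : S) *
            (FreeGroup.of (⟨u, hu⟩ : S))⁻¹ * (FreeGroup.of (⟨v, hv⟩ : S))⁻¹)
        have := h1.mpr (Subgroup.subset_normalClosure this)
        exact this
      · simp [dif_pos hu, dif_neg hv]
    · simp [dif_neg hu]
  let φ : RAAG G →* RAAG (G.induce S) := PresentedGroup.toGroup hrel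
  have hcomp : φ.comp ψ = MonoidHom.id _ := by
    ext s
    show φ (ψ (RAAG.gen (G.induce S) s)) = RAAG.gen (G.induce S) s
    rw [hψ s]
    show PresentedGroup.toGroup hrel (PresentedGroup.of (s : V)) = _
    rw [PresentedGroup.toGroup.of]
    simp [hf, s.2]
  intro a b hab
  have := congrArg φ hab
  calc a = φ.comp ψ a := by rw [hcomp]; rfl
    _ = φ.comp ψ b := this
    _ = b := by rw [hcomp]; rfl
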